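/- Let f : ℝ^d → ℝ be differentiable and L-smooth (L > 0), and suppose f(x) ≥ f* for all x. Let T ≥ 1, and let (x_t)_{t≥1}, (ĝ_t)_{t≥1}, (η_t)_{t≥1}, (ξ_t)_{t≥1} satisfy: 0 < η_t ≤ 1/L, ξ_t ≥ 0, ‖ĝ_t − ∇f(x_t)‖² ≤ ξ_t, and x_{t+1} = x_t − η_t ĝ_t for all t. Then min_{1 ≤ t ≤ T} ‖∇f(x_t)‖² ≤ ( 2·(f(x_1) − f*) + ∑_{t=1}^{T} η_t ξ_t ) / ( ∑_{t=1}^{T} η_t ). -/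

import Mathlib

set_option maxHeartbeats 800000

open intervalIntegral in
lemma descent_lemma {d : ℕ}
    (f : EuclideanSpace ℝ (Fin d) → ℝ) (L : ℝ) (hL : 0 < L)
    (hdiff : Differentiable ℝ f)
    (hsmooth : ∀ x y, ‖gradient f x - gradient f y‖ ≤ L * ‖x - y‖)
    (p q : EuclideanSpace ℝ (Fin d)) :
    f q ≤ f p + inner ℝ (gradient f p) (q - p) + L / 2 * ‖q - p‖ ^ 2 := by
  set v := q - p with hv
  have hcontg : Continuous (gradient f) := by
    refine (LipschitzWith.of_dist_le_mul (K := L.toNNReal) ?_).continuous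
    intro a b
    simpa [dist_eq_norm, Real.coe_toNNReal L hL.le] using hsmooth a b
  have hline : ∀ s : ℝ, HasDerivAt (fun s : ℝ => p + s • v) v s := by
    intro s
    simpa using ((hasDerivAt_id s).smul_const v).const_add p
  have hφ : ∀ s : ℝ, HasDerivAt (fun s : ℝ => f (p + s • v))
      (inner ℝ (gradient f (p + s • v)) v : ℝ) s := by
    intro s
    have hg := (hdiff (p + s • v)).hasGradientAt
    have := hg.hasFDerivAt.comp_hasDerivAt s (hline s)
    exact this
  have hcont : Continuous fun s : ℝ => (inner ℝ (gradient f (p + s • v)) v : ℝ) := by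
    exact (hcontg.comp (by continuity)).inner continuous_const
  have hint : f (p + (1:ℝ) • v) - f (p + (0:ℝ) • v) =
      ∫ s in (0:ℝ)..1, (inner ℝ (gradient f (p + s • v)) v : ℝ) := by
    refine (integral_eq_sub_of_hasDerivAt (fun s _ => hφ s)
      (hcont.intervalIntegrable 0 1)).symm
  have h10 : f q - f p = ∫ s in (0:ℝ)..1, (inner ℝ (gradient f (p + s • v)) v : ℝ) := by
    simpa [hv] using hint
  have hmono : (∫ s in (0:ℝ)..1, (inner ℝ (gradient f (p + s • v)) v : ℝ)) ≤
      ∫ s in (0:ℝ)..1, ((inner ℝ (gradient f p) v : ℝ) + L * s * ‖v‖ ^ 2) := by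
    refine integral_mono_on (by norm_num) (hcont.intervalIntegrable 0 1)
      ((by continuity : Continuous fun s : ℝ =>
        ((inner ℝ (gradient f p) v : ℝ) + L * s * ‖v‖ ^ 2)).intervalIntegrable 0 1) ?_
    intro s hs
    rw [Set.mem_Icc] at hs
    have h1 : (inner ℝ (gradient f (p + s • v)) v : ℝ) - inner ℝ (gradient f p) v
        = inner ℝ (gradient f (p + s • v) - gradient f p) v := by
      rw [inner_sub_left]
    have h2 : (inner ℝ (gradient f (p + s • v) - gradient f p) v : ℝ) ≤
        ‖gradient f (p + s • v) - gradient f p‖ * ‖v‖ := real_inner_le_norm _ _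
    have h3 : ‖gradient f (p + s • v) - gradient f p‖ ≤ L * (s * ‖v‖) := by
      have := hsmooth (p + s • v) p
      simpa [norm_smul, abs_of_nonneg hs.1, mul_assoc] using this
    have h4 : ‖gradient f (p + s • v) - gradient f p‖ * ‖v‖ ≤ L * (s * ‖v‖) * ‖v‖ :=
      mul_le_mul_of_nonneg_right h3 (norm_nonneg _)
    have h5 : L * (s * ‖v‖) * ‖v‖ = L * s * ‖v‖ ^ 2 := by ring
    linarith
  have hval : (∫ s in (0:ℝ)..1, ((inner ℝ (gradient f p) v : ℝ) + L * s * ‖v‖ ^ 2))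
      = (inner ℝ (gradient f p) v : ℝ) + L / 2 * ‖v‖ ^ 2 := by
    have : (∫ s in (0:ℝ)..1, ((inner ℝ (gradient f p) v : ℝ) + L * s * ‖v‖ ^ 2))
        = (∫ s in (0:ℝ)..1, (inner ℝ (gradient f p) v : ℝ))
          + ∫ s in (0:ℝ)..1, L * s * ‖v‖ ^ 2 := by
      refine integral_add (intervalIntegrable_const) ?_
      exact (by continuity : Continuous fun s : ℝ => L * s * ‖v‖ ^ 2).intervalIntegrable 0 1
    rw [this]
    have h5 : (∫ s in (0:ℝ)..1, L * s * ‖v‖ ^ 2)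
        = ∫ s in (0:ℝ)..1, (L * ‖v‖ ^ 2) * s := by
      congr 1; funext s; ring
    rw [h5, intervalIntegral.integral_const_mul, integral_id]
    simp; ring
  linarith [h10, hmono, hval.le, le_of_eq h10]

/-- Convergence of gradient descent with biased gradient oracles: the minimum squared
gradient norm over the first `T` iterations is bounded via the cumulative bias. -/
theorem biased_gd_min_grad_norm_le {d : ℕ}
    (f : EuclideanSpace ℝ (Fin d) → ℝ) (L : ℝ) (hL : 0 < L)
    (hdiff : Differentiable ℝ f)
    (hsmooth : ∀ x y, ‖gradient f x - gradient f y‖ ≤ L * ‖x - y‖)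
    (fstar : ℝ) (hfstar : ∀ x, fstar ≤ f x)
    (T : ℕ) (hT : 1 ≤ T)
    (x g : ℕ → EuclideanSpace ℝ (Fin d)) (η ξ : ℕ → ℝ)
    (hη : ∀ t, 1 ≤ t → 0 < η t ∧ η t ≤ 1 / L)
    (hξ : ∀ t, 1 ≤ t → 0 ≤ ξ t)
    (hbias : ∀ t, 1 ≤ t → ‖g t - gradient f (x t)‖ ^ 2 ≤ ξ t)
    (hupdate : ∀ t, 1 ≤ t → x (t + 1) = x t - η t • g t) :
    (Finset.Icc 1 T).inf' (Finset.nonempty_Icc.mpr hT)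
        (fun t => ‖gradient f (x t)‖ ^ 2) ≤
      (2 * (f (x 1) - fstar) + ∑ t ∈ Finset.Icc 1 T, η t * ξ t) /
        (∑ t ∈ Finset.Icc 1 T, η t) := by
  -- per-step inequality
  have key : ∀ t, 1 ≤ t → η t * ‖gradient f (x t)‖ ^ 2 ≤
      2 * (f (x t) - f (x (t + 1))) + η t * ξ t := by
    intro t ht
    obtain ⟨hη0, hη1⟩ := hη t ht
    have hLη : L * η t ≤ 1 := by
      rw [le_div_iff₀ hL] at hη1; linarith
    set n := gradient f (x t) with hn
    set e := g t - n with he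
    have hge : g t = n + e := by simp [he]
    have hdes := descent_lemma f L hL hdiff hsmooth (x t) (x (t + 1))
    rw [hupdate t ht] at hdes
    have hsub : x t - η t • g t - x t = (-η t) • g t := by
      rw [sub_sub_cancel_left, neg_smul]
    rw [hsub, ← hupdate t ht] at hdes
    have hinner : (inner ℝ n ((-η t) • g t) : ℝ) = -η t * inner ℝ n (g t) := by
      rw [real_inner_smul_right]
    have hnorm : ‖(-η t) • g t‖ ^ 2 = η t ^ 2 * ‖g t‖ ^ 2 := by
      rw [norm_smul]; simp [abs_of_pos hη0]; ring
    rw [hinner, hnorm] at hdes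
    have hexp : ‖g t‖ ^ 2 = ‖n‖ ^ 2 + 2 * inner ℝ n e + ‖e‖ ^ 2 := by
      rw [hge]; exact norm_add_sq_real n e
    have hing : (inner ℝ n (g t) : ℝ) = ‖n‖ ^ 2 + inner ℝ n e := by
      rw [hge, inner_add_right, real_inner_self_eq_norm_sq]
    have hbias' : ‖e‖ ^ 2 ≤ ξ t := hbias t ht
    have hq : L / 2 * (η t ^ 2 * ‖g t‖ ^ 2) ≤ η t / 2 * ‖g t‖ ^ 2 := by
      have hg2 : (0:ℝ) ≤ ‖g t‖ ^ 2 := sq_nonneg _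
      nlinarith
    have heξ : η t * ‖e‖ ^ 2 ≤ η t * ξ t :=
      mul_le_mul_of_nonneg_left hbias' hη0.le
    have e1 : η t * inner ℝ n (g t) = η t * ‖n‖ ^ 2 + η t * inner ℝ n e := by
      rw [hing]; ring
    have e2 : η t / 2 * ‖g t‖ ^ 2 =
        η t / 2 * ‖n‖ ^ 2 + η t * inner ℝ n e + η t / 2 * ‖e‖ ^ 2 := by
      rw [hexp]; ring
    linarith [hdes, hq, e1, e2, heξ]
  -- telescoping sum
  have hsum : ∀ N : ℕ, (∑ t ∈ Finset.Icc 1 N, η t * ‖gradient f (x t)‖ ^ 2) ≤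
      2 * (f (x 1) - f (x (N + 1))) + ∑ t ∈ Finset.Icc 1 N, η t * ξ t := by
    intro N
    induction N with
    | zero => simp
    | succ N ih =>
      rw [Finset.sum_Icc_succ_top (by omega), Finset.sum_Icc_succ_top (by omega)]
      have := key (N + 1) (by omega)
      linarith
  have hSpos : 0 < ∑ t ∈ Finset.Icc 1 T, η t := by
    refine Finset.sum_pos (fun t ht => (hη t (Finset.mem_Icc.mp ht).1).1)
      (Finset.nonempty_Icc.mpr hT)
  rw [le_div_iff₀ hSpos]
  set m := (Finset.Icc 1 T).inf' (Finset.nonempty_Icc.mpr hT)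
      (fun t => ‖gradient f (x t)‖ ^ 2) with hm
  have hstep : m * (∑ t ∈ Finset.Icc 1 T, η t) ≤
      ∑ t ∈ Finset.Icc 1 T, η t * ‖gradient f (x t)‖ ^ 2 := by
    rw [Finset.mul_sum]
    refine Finset.sum_le_sum fun t ht => ?_
    rw [mul_comm]
    exact mul_le_mul_of_nonneg_left
      (Finset.inf'_le _ ht) (hη t (Finset.mem_Icc.mp ht).1).1.le
  have hfs := hfstar (x (T + 1))
  have := hsum T
  linarith
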